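/- arXiv:2404.13661 — 9 statements merged into one kernel-verified Lean document; each statement's English description precedes it below -/
import Mathlib

section
/- For all ordinals x, y, z, t, the identity x + y + z + x + t + y = y + x + z + x + t + y holds. -/
open Ordinal

private lemma aux_swap (x y s : Ordinal) (hx0 : x ≠ 0) (hy0 : y ≠ 0)
    (hxs : x ≤ s) (hys : y ≤ s) : x + (y + s) = y + (x + s) := by
  have hxd : x < ω ^ Order.succ (log ω x) := lt_opow_succ_log_self one_lt_omega0 x
  have hyd : y < ω ^ Order.succ (log ω y) := lt_opow_succ_log_self one_lt_omega0 y
  have hxl : ω ^ log ω x ≤ x := opow_log_le_self ω hx0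
  have hyl : ω ^ log ω y ≤ y := opow_log_le_self ω hy0
  rcases lt_trichotomy (log ω x) (log ω y) with h | h | h
  · -- deg x < deg y : x is absorbed
    have hx' : x < ω ^ log ω y :=
      hxd.trans_le (opow_le_opow_right omega0_pos (Order.succ_le_of_lt h))
    have h1 : x + y = y := add_absorp hx' hyl
    have h2 : x + s = s := add_absorp hx' (hyl.trans hys)
    rw [← add_assoc, h1, h2]
  · -- equal degrees : commute natural coefficients
    set P := ω ^ log ω x with hP
    have hP0 : P ≠ 0 := (opow_pos _ omega0_pos).ne'
    have hPs : P ≤ s := hxl.trans hxs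
    have hxP : x % P < P := mod_lt x hP0
    have hyP : y % P < P := mod_lt y hP0
    have hxe : P * (x / P) + x % P = x := div_add_mod x P
    have hye : P * (y / P) + y % P = y := div_add_mod y P
    have hm : x / P < ω := by rw [div_lt hP0, ← opow_succ]; exact hxd
    have hn : y / P < ω := by rw [div_lt hP0, hP, ← opow_succ, h]; exact hyd
    obtain ⟨m, hm'⟩ := lt_omega0.1 hm
    obtain ⟨n, hn'⟩ := lt_omega0.1 hn
    rw [hm'] at hxe
    rw [hn'] at hye
    have habs_y : y % P + s = s := add_absorp hyP hPs
    have habs_x : x % P + s = s := add_absorp hxP hPs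
    have e1 : x + (y + s) = P * (↑m + ↑n) + s := by
      rw [← hxe, ← hye, add_assoc (P * (n : Ordinal)), habs_y,
        add_assoc (P * (m : Ordinal)),
        add_absorp hxP (hPs.trans (le_add_left (le_refl s) : s ≤ P * (n : Ordinal) + s)),
        ← add_assoc, ← mul_add]
    have e2 : y + (x + s) = P * (↑n + ↑m) + s := by
      rw [← hxe, ← hye, add_assoc (P * (m : Ordinal)), habs_x,
        add_assoc (P * (n : Ordinal)),
        add_absorp hyP (hPs.trans (le_add_left (le_refl s) : s ≤ P * (m : Ordinal) + s)),
        ← add_assoc, ← mul_add]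
    rw [e1, e2, ← Nat.cast_add, ← Nat.cast_add, Nat.add_comm]
  · -- deg y < deg x : y is absorbed
    have hy' : y < ω ^ log ω x :=
      hyd.trans_le (opow_le_opow_right omega0_pos (Order.succ_le_of_lt h))
    have h1 : y + x = x := add_absorp hy' hxl
    have h2 : y + s = s := add_absorp hy' (hxl.trans hxs)
    rw [← add_assoc y x s, h1, h2]

theorem guarded_commutation (x y z t : Ordinal) :
    x + y + z + x + t + y = y + x + z + x + t + y := by
  rcases eq_or_ne x 0 with rfl | hx0
  · simp
  rcases eq_or_ne y 0 with rfl | hy0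
  · simp
  simp only [add_assoc]
  exact aux_swap x y (z + (x + (t + y))) hx0 hy0
    ((le_add_right (le_refl x) : x ≤ x + (t + y)).trans (le_add_left (le_refl _) : x + (t + y) ≤ z + (x + (t + y))))
    (((le_add_left (le_refl y) : y ≤ t + y).trans (le_add_left (le_refl _) : t + y ≤ x + (t + y))).trans (le_add_left (le_refl _) : x + (t + y) ≤ z + (x + (t + y))))
end

section
/- For all ordinals x, y < ω^ω and natural numbers p < q, ω^p·x + y + ω^q·x = y + ω^q·x. -/
open Ordinal

theorem pow_absorption_below_omega_omega (x y : Ordinal)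
    (hx : x < ω ^ ω) (hy : y < ω ^ ω) (p q : ℕ) (hpq : p < q) :
    ω ^ (p : Ordinal) * x + y + ω ^ (q : Ordinal) * x = y + ω ^ (q : Ordinal) * x := by
  rcases eq_or_ne x 0 with rfl | hx0
  · simp
  · obtain ⟨n, hn⟩ := lt_omega0.1 ((lt_opow_iff_log_lt one_lt_omega0 hx0).1 hx)
    rw [add_assoc]
    apply add_absorp (b := (p : Ordinal) + n + 1)
    · calc ω ^ (p : Ordinal) * x < ω ^ (p : Ordinal) * ω ^ ((n : Ordinal) + 1) := by
            rw [mul_lt_mul_iff_of_pos_left (opow_pos _ omega0_pos)]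
            have := lt_opow_succ_log_self one_lt_omega0 x
            rwa [hn] at this
        _ = ω ^ ((p : Ordinal) + n + 1) := by rw [← opow_add, add_assoc]
    · calc ω ^ ((p : Ordinal) + n + 1) ≤ ω ^ ((q : Ordinal) + n) := by
            apply opow_le_opow_right omega0_pos
            have : ((p : Ordinal) + n + 1) = ((p + n + 1 : ℕ) : Ordinal) := by
              push_cast; ring
            rw [this]
            have : ((q : Ordinal) + n) = ((q + n : ℕ) : Ordinal) := by push_cast; ring
            rw [this, Nat.cast_le]
            omega
        _ = ω ^ (q : Ordinal) * ω ^ (n : Ordinal) := by rw [← opow_add]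
        _ ≤ ω ^ (q : Ordinal) * x := by
            apply mul_le_mul_right
            have := opow_log_le_self ω hx0
            rwa [hn] at this
        _ ≤ y + ω ^ (q : Ordinal) * x := le_add_self
end

section
/- For all natural numbers p with 0 < p and 0 < q with p < q, and all ordinals x, y, the identity ω^p·x + y + ω^q·x = x + y + ω^q·x holds for all transfinite ordinals x and y. -/
open Ordinal

theorem pow_absorption_all_ordinals (p q : ℕ) (hp : 0 < p) (hq : 0 < q) (hpq : p < q)
    (x y : Ordinal) :
    ω ^ (p : Ordinal) * x + y + ω ^ (q : Ordinal) * x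
      = x + y + ω ^ (q : Ordinal) * x := by
  rcases eq_or_ne x 0 with rfl | hx
  · simp
  have hω1 : (1:Ordinal) < ω := one_lt_omega0
  set b := log ω x with hb
  set c := x / ω ^ b with hc
  set r := x % ω ^ b with hr
  have hxd : ω ^ b * c + r = x := div_add_mod x (ω ^ b)
  have hc1 : 1 ≤ c := by
    rw [hc, le_div (opow_ne_zero b omega0_ne_zero), mul_one]
    exact opow_log_le_self ω hx
  have hcω : c < ω := div_opow_log_lt x hω1
  have hrb : r < ω ^ b := mod_lt x (opow_ne_zero b omega0_ne_zero)
  have expand : ∀ m : ℕ, ω ^ (m : Ordinal) * x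
      = ω ^ ((m : Ordinal) + b) * c + ω ^ (m : Ordinal) * r := by
    intro m
    rw [← hxd, mul_add, ← mul_assoc, ← opow_add]
  rw [add_assoc, add_assoc, expand q]
  set Z := y + (ω ^ ((q:Ordinal) + b) * c + ω ^ (q:Ordinal) * r) with hZ
  have hZge : ω ^ ((q:Ordinal) + b) ≤ Z := by
    calc ω ^ ((q:Ordinal) + b) = ω ^ ((q:Ordinal) + b) * 1 := (mul_one _).symm
      _ ≤ ω ^ ((q:Ordinal) + b) * c := mul_le_mul_right hc1 _
      _ ≤ ω ^ ((q:Ordinal) + b) * c + ω ^ (q:Ordinal) * r := le_self_add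
      _ ≤ Z := le_add_self
  have hprZ : ω ^ (p:Ordinal) * r + Z = Z := by
    refine add_absorp ?_ hZge
    calc ω ^ (p:Ordinal) * r < ω ^ (p:Ordinal) * ω ^ b := by
          exact mul_lt_mul_of_pos_left hrb (opow_pos _ omega0_pos)
      _ = ω ^ ((p:Ordinal) + b) := (opow_add ω p b).symm
      _ ≤ ω ^ ((q:Ordinal) + b) := opow_le_opow_right omega0_pos
          (add_le_add_left (by exact_mod_cast hpq.le : (p:Ordinal) ≤ q) b)
  clear_value b c r
  rcases lt_or_ge b ω with hbω | hbω
  · -- b finite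
    obtain ⟨n, rfl⟩ := lt_omega0.1 hbω
    have key1 : ((p:Ordinal) + n) + 1 ≤ (q:Ordinal) + n := by
      have : ((p + n + 1 : ℕ) : Ordinal) ≤ ((q + n : ℕ) : Ordinal) := by
        exact_mod_cast Nat.cast_le.2 (by omega : p + n + 1 ≤ q + n)
      simpa [Nat.cast_add, Nat.cast_one] using this
    have key2 : ((n:Ordinal)) + 1 ≤ (q:Ordinal) + n := by
      have : ((n + 1 : ℕ) : Ordinal) ≤ ((q + n : ℕ) : Ordinal) := by
        exact_mod_cast Nat.cast_le.2 (by omega : n + 1 ≤ q + n)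
      simpa [Nat.cast_add, Nat.cast_one] using this
    have habs : ∀ e : Ordinal, e ≤ (q:Ordinal) + n → ∀ a, a < ω ^ e → a + Z = Z := by
      intro e he a ha
      exact add_absorp ha (le_trans (opow_le_opow_right omega0_pos he) hZge)
    have hLHS : ω ^ (p:Ordinal) * x + Z = Z := by
      rw [expand p, add_assoc, hprZ]
      refine habs (((p:Ordinal) + n) + 1) key1 _ ?_
      calc ω ^ ((p:Ordinal) + n) * c < ω ^ ((p:Ordinal) + n) * ω := by
            exact mul_lt_mul_of_pos_left hcω (opow_pos _ omega0_pos)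
        _ = ω ^ (((p:Ordinal) + n) + 1) := by conv_rhs => rw [opow_add, opow_one]
    have hRHS : x + Z = Z := by
      refine habs ((n:Ordinal) + 1) key2 _ ?_
      have hcsucc : c + 1 ≤ ω := by
        rw [Ordinal.add_one_eq_succ]
        exact Order.succ_le_of_lt hcω
      calc x = ω ^ (n:Ordinal) * c + r := hxd.symm
        _ < ω ^ (n:Ordinal) * c + ω ^ (n:Ordinal) := add_lt_add_right hrb _
        _ = ω ^ (n:Ordinal) * (c + 1) := by rw [mul_add, mul_one]
        _ ≤ ω ^ (n:Ordinal) * ω := mul_le_mul_right hcsucc _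
        _ = ω ^ ((n:Ordinal) + 1) := by conv_rhs => rw [opow_add, opow_one]
    rw [hLHS, hRHS]
  · -- b infinite
    have hpb : (p:Ordinal) + b = b := by
      have h1 : (p:Ordinal) < ω ^ (1:Ordinal) := by rw [opow_one]; exact nat_lt_omega0 p
      have h2 : ω ^ (1:Ordinal) ≤ b := by rwa [opow_one]
      exact add_absorp h1 h2
    have hrZ : r + Z = Z := by
      refine add_absorp hrb ?_
      exact (opow_le_opow_right omega0_pos (le_add_self (a := b) (b := (q:Ordinal)))).trans hZge
    rw [expand p, add_assoc, hprZ, hpb, ← hxd, add_assoc, hrZ]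
end

section
/- For all ordinals x, y, t, u and natural numbers p, q, r with p > 0, the identity x + ω^r·y + t + ω^p·x + u + ω^q·y = ω^r·y + x + t + ω^p·x + u + ω^q·y holds for all transfinite ordinals. -/
open Ordinal

/-- If one of `a`, `b` is below `ω^s` and `ω^s ≤ c`, then `a` and `b` commute before `c`. -/
lemma swap_lemma1 {a b c s : Ordinal} (h : a < ω ^ s ∨ b < ω ^ s) (hc : ω ^ s ≤ c) :
    a + b + c = b + a + c := by
  obtain ⟨d, rfl⟩ : ∃ d, c = ω ^ s + d := ⟨c - ω ^ s, (Ordinal.add_sub_cancel_of_le hc).symm⟩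
  have h2 : a + (b + ω ^ s) = b + (a + ω ^ s) := by
    rcases h with h | h
    · rw [add_absorp h le_add_self, add_absorp h le_rfl]
    · rw [add_absorp h le_rfl, add_absorp h le_add_self]
  simp only [← add_assoc]
  rw [add_assoc a b, add_assoc b a, h2]

lemma swap_lemma2 {a b c e : Ordinal} (ha1 : ω ^ e ≤ a) (ha2 : a < ω ^ e * ω)
    (hb1 : ω ^ e ≤ b) (hb2 : b < ω ^ e * ω) (hc : ω ^ e ≤ c) :
    a + b + c = b + a + c := by
  have he : (ω ^ e : Ordinal) ≠ 0 := (opow_pos e omega0_pos).ne'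
  obtain ⟨m, hm⟩ := lt_omega0.1 ((Ordinal.div_lt he).2 ha2)
  obtain ⟨k, hk⟩ := lt_omega0.1 ((Ordinal.div_lt he).2 hb2)
  have hma : ω ^ e * m + a % ω ^ e = a := by rw [← hm]; exact Ordinal.div_add_mod a _
  have hkb : ω ^ e * k + b % ω ^ e = b := by rw [← hk]; exact Ordinal.div_add_mod b _
  have hm1 : (1 : Ordinal) ≤ m := by
    rw [← hm]; exact (Ordinal.le_div he).2 (by simpa using ha1)
  have hk1 : (1 : Ordinal) ≤ k := by
    rw [← hk]; exact (Ordinal.le_div he).2 (by simpa using hb1)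
  have key : ∀ (u v : ℕ) (s s' : Ordinal), s < ω ^ e → s' < ω ^ e → (1 : Ordinal) ≤ v →
      (ω ^ e * u + s) + (ω ^ e * v + s') + c = ω ^ e * (u + v : ℕ) + c := by
    intro u v s s' hs hs' hv
    have hva : (ω ^ e : Ordinal) ≤ ω ^ e * v + c :=
      (le_mul_left _ (lt_of_lt_of_le zero_lt_one hv)).trans le_self_add
    simp only [add_assoc]
    rw [add_absorp hs' hc, add_absorp hs hva, ← add_assoc, ← mul_add, Nat.cast_add]
  rw [← hma, ← hkb,
    key m k _ _ (Ordinal.mod_lt a he) (Ordinal.mod_lt b he) hk1,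
    key k m _ _ (Ordinal.mod_lt b he) (Ordinal.mod_lt a he) hm1, Nat.add_comm]

theorem hidden_old_variable1 (x y t u : Ordinal) (p q r : ℕ) (hp : 0 < p) :
    x + ω ^ (r : Ordinal) * y + t + ω ^ (p : Ordinal) * x + u + ω ^ (q : Ordinal) * y
      = ω ^ (r : Ordinal) * y + x + t + ω ^ (p : Ordinal) * x + u + ω ^ (q : Ordinal) * y := by
  rcases eq_or_ne x 0 with rfl | hx0
  · simp
  rcases eq_or_ne y 0 with rfl | hy0
  · simp
  set w : Ordinal := ω ^ (r : Ordinal) * y with hw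
  set c : Ordinal := t + (ω ^ (p : Ordinal) * x + (u + ω ^ (q : Ordinal) * y)) with hcdef
  have hcP : ω ^ (p : Ordinal) * x ≤ c :=
    le_trans le_self_add le_add_self
  have hcQ : ω ^ (q : Ordinal) * y ≤ c :=
    le_trans le_add_self (le_trans le_add_self le_add_self)
  obtain ⟨e, he⟩ : ∃ e, e = log ω x := ⟨_, rfl⟩
  obtain ⟨f, hf⟩ : ∃ f, f = log ω y := ⟨_, rfl⟩
  have hxe : ω ^ e ≤ x := he ▸ opow_log_le_self ω hx0
  have hxe' : x < ω ^ (e + 1) := by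
    have := lt_opow_succ_log_self one_lt_omega0 x
    rw [← add_one_eq_succ] at this
    rwa [he]
  have hye : ω ^ f ≤ y := hf ▸ opow_log_le_self ω hy0
  have hye' : y < ω ^ (f + 1) := by
    have := lt_opow_succ_log_self one_lt_omega0 y
    rw [← add_one_eq_succ] at this
    rwa [hf]
  have hxP : x ≤ ω ^ (p : Ordinal) * x := le_mul_right x (opow_pos _ omega0_pos)
  have hyQ : y ≤ ω ^ (q : Ordinal) * y := le_mul_right y (opow_pos _ omega0_pos)
  have hws : w < ω ^ ((r : Ordinal) + f + 1) := by
    calc w < ω ^ (r : Ordinal) * ω ^ (f + 1) :=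
        mul_lt_mul_of_pos_left hye' (opow_pos _ omega0_pos)
      _ = ω ^ ((r : Ordinal) + (f + 1)) := (opow_add _ _ _).symm
      _ = ω ^ ((r : Ordinal) + f + 1) := by rw [add_assoc]
  have key : x + w + c = w + x + c := by
    rcases lt_or_ge e ω with hef | hei
    · -- e finite : use s = e + 1, ω^(e+1) ≤ ω^p * x
      obtain ⟨n, rfl⟩ := lt_omega0.1 hef
      apply swap_lemma1 (Or.inl hxe') (le_trans _ hcP)
      have h1 : ((n : Ordinal) + 1) ≤ (1 : Ordinal) + n := by norm_cast; omega
      calc ω ^ ((n : Ordinal) + 1) ≤ ω ^ ((1 : Ordinal) + n) :=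
            opow_le_opow_right omega0_pos h1
        _ = ω ^ (1 : Ordinal) * ω ^ (n : Ordinal) := opow_add _ _ _
        _ ≤ ω ^ (p : Ordinal) * ω ^ (n : Ordinal) := by
            apply mul_le_mul_left
            exact opow_le_opow_right omega0_pos (by exact_mod_cast hp)
        _ ≤ ω ^ (p : Ordinal) * x := mul_le_mul_right hxe _
    · -- e infinite
      rcases lt_trichotomy e ((r : Ordinal) + f) with hrf | hrf | hrf
      · -- e < r + f : then f ≥ e + 1, use s = e + 1 with ω^q * y
        have hfi : ω ≤ f := by
          by_contra hfl
          push_neg at hfl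
          obtain ⟨n, rfl⟩ := lt_omega0.1 hfl
          have hlt : (r : Ordinal) + n < ω := by
            have := nat_lt_omega0 (r + n); rwa [Nat.cast_add] at this
          exact absurd (hei.trans hrf.le) hlt.not_ge
        have hrff : (r : Ordinal) + f = f := by
          have h1 : (r : Ordinal) < ω ^ (1 : Ordinal) := by
            rw [opow_one]; exact nat_lt_omega0 r
          exact add_absorp h1 (by rwa [opow_one])
        rw [hrff] at hrf
        have hf1 : e + 1 ≤ f := by rw [add_one_eq_succ]; exact Order.succ_le_of_lt hrf
        apply swap_lemma1 (Or.inl hxe') (le_trans _ hcQ)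
        calc ω ^ (e + 1) ≤ ω ^ f := opow_le_opow_right omega0_pos hf1
          _ ≤ y := hye
          _ ≤ ω ^ (q : Ordinal) * y := hyQ
      · -- e = r + f : both heads at level e, use swap_lemma2
        have hmul : (ω : Ordinal) ^ e * ω = ω ^ (e + 1) := by rw [opow_add, opow_one]
        have hw1 : ω ^ e ≤ w := by
          rw [hrf, opow_add]
          exact mul_le_mul_right hye _
        have hw2 : w < ω ^ e * ω := by rw [hmul, hrf]; exact hws
        have hx2 : x < ω ^ e * ω := by rw [hmul]; exact hxe'
        exact swap_lemma2 hxe hx2 hw1 hw2 (le_trans (hxe.trans hxP) hcP)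
      · -- r + f < e : w < ω^(r+f+1) ≤ ω^e ≤ x ≤ ω^p x ≤ c
        have hle : (r : Ordinal) + f + 1 ≤ e := by
          rw [add_one_eq_succ]; exact Order.succ_le_of_lt hrf
        apply swap_lemma1 (Or.inr hws)
        calc ω ^ ((r : Ordinal) + f + 1) ≤ ω ^ e :=
            opow_le_opow_right omega0_pos hle
          _ ≤ x := hxe
          _ ≤ ω ^ (p : Ordinal) * x := hxP
          _ ≤ c := hcP
  calc x + w + t + ω ^ (p : Ordinal) * x + u + ω ^ (q : Ordinal) * y
      = x + w + c := by rw [hcdef]; simp only [add_assoc]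
    _ = w + x + c := key
    _ = w + x + t + ω ^ (p : Ordinal) * x + u + ω ^ (q : Ordinal) * y := by
        rw [hcdef]; simp only [add_assoc]
end

section
/- For all ordinals x, y, t, u and natural numbers p, q with p > 0, the identity x + ω^q·y + t + ω^q·y + u + ω^p·x = ω^q·y + x + t + ω^q·y + u + ω^p·x holds. -/
open Ordinal

-- commutativity for ordinals below ω
lemma aux_nat_add_comm {a b : Ordinal} (ha : a < ω) (hb : b < ω) : a + b = b + a := by
  obtain ⟨m, rfl⟩ := lt_omega0.mp ha
  obtain ⟨n, rfl⟩ := lt_omega0.mp hb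
  rw [← Nat.cast_add, ← Nat.cast_add, Nat.add_comm]

-- splitting a sum when the right summand is at least ω^γ
lemma aux_sum_eq (γ a b : Ordinal) (hb : ω ^ γ ≤ b) :
    a + b = ω ^ γ * (a / ω ^ γ + b / ω ^ γ) + b % ω ^ γ := by
  have ho : (ω : Ordinal) ^ γ ≠ 0 := (opow_pos γ omega0_pos).ne'
  have hb1 : 1 ≤ b / ω ^ γ := (le_div ho).mpr (by simpa using hb)
  have habs : a % ω ^ γ + ω ^ γ * (b / ω ^ γ) = ω ^ γ * (b / ω ^ γ) :=
    add_absorp (mod_lt a ho) (by simpa using mul_le_mul_right hb1 (ω ^ γ))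
  calc a + b = ω ^ γ * (a / ω ^ γ) + a % ω ^ γ + (ω ^ γ * (b / ω ^ γ) + b % ω ^ γ) := by
        rw [div_add_mod, div_add_mod]
    _ = ω ^ γ * (a / ω ^ γ) + (a % ω ^ γ + ω ^ γ * (b / ω ^ γ)) + b % ω ^ γ := by
        rw [add_assoc, add_assoc, add_assoc]
    _ = ω ^ γ * (a / ω ^ γ) + ω ^ γ * (b / ω ^ γ) + b % ω ^ γ := by rw [habs]
    _ = ω ^ γ * (a / ω ^ γ + b / ω ^ γ) + b % ω ^ γ := by rw [mul_add]

-- the key swap lemma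
lemma aux_swap_s8 (d y e : Ordinal) (hde : d ≤ e) : d + y + (y + e) = y + d + (y + e) := by
  rcases lt_trichotomy (d + y) (y + d) with h | h | h
  · -- d + y < y + d
    have hm : (d + y) + ((y + d) - (d + y)) = y + d := Ordinal.add_sub_cancel_of_le h.le
    set m := (y + d) - (d + y) with hmdef
    suffices habs : m + (y + e) = y + e by
      conv_rhs => rw [← hm, add_assoc, habs]
    by_cases hm0 : m = 0
    · simp [hm0]
    have hmd : m ≤ d := by
      have h2 : (d + y) + m ≤ (d + y) + d := by
        rw [hm]
        calc y + d ≤ d + (y + d) := le_add_self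
          _ = (d + y) + d := (add_assoc _ _ _).symm
      exact (add_le_add_iff_left _).mp h2
    have hd0 : d ≠ 0 := by
      rintro rfl
      exact hm0 (nonpos_iff_eq_zero.mp hmd)
    have hy0 : y ≠ 0 := by
      rintro rfl
      simp at h
    set α := log ω d with hα
    by_cases hy1 : ω ^ Order.succ α ≤ y
    · exact add_absorp (hmd.trans_lt (lt_opow_succ_log_self one_lt_omega0 d))
        (hy1.trans (le_self_add))
    · push_neg at hy1
      have hαy : ω ^ α ≤ y := by
        by_contra hc
        push_neg at hc
        have hyd : y + d = d := add_absorp hc (opow_log_le_self ω hd0)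
        exact absurd h (hyd.le.trans le_self_add).not_gt
      have hone : (ω : Ordinal) ^ α ≠ 0 := (opow_pos α omega0_pos).ne'
      have hjω : d / ω ^ α < ω := (div_lt hone).mpr
        (by rw [← opow_succ]; exact lt_opow_succ_log_self one_lt_omega0 d)
      have hkω : y / ω ^ α < ω := (div_lt hone).mpr (by rwa [← opow_succ])
      have e1 : d + y = ω ^ α * (d / ω ^ α + y / ω ^ α) + y % ω ^ α := aux_sum_eq α d y hαy
      have e2 : y + d = ω ^ α * (d / ω ^ α + y / ω ^ α) + d % ω ^ α := by
        rw [aux_sum_eq α y d (opow_log_le_self ω hd0), aux_nat_add_comm hkω hjω]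
      have hym : y % ω ^ α + m = d % ω ^ α := by
        have h3 := hm
        rw [e1, e2, add_assoc] at h3
        exact (add_right_inj _).mp h3
      have hmlt : m < ω ^ α :=
        calc m ≤ y % ω ^ α + m := le_add_self
          _ = d % ω ^ α := hym
          _ < ω ^ α := mod_lt d hone
      exact add_absorp hmlt (hαy.trans (le_self_add))
  · rw [h]
  · -- y + d < d + y
    have hm : (y + d) + ((d + y) - (y + d)) = d + y := Ordinal.add_sub_cancel_of_le h.le
    set m := (d + y) - (y + d) with hmdef
    suffices habs : m + (y + e) = y + e by
      conv_lhs => rw [← hm, add_assoc, habs]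
    by_cases hm0 : m = 0
    · simp [hm0]
    have hmy : m ≤ y := by
      have h2 : (y + d) + m ≤ (y + d) + y := by
        rw [hm]
        calc d + y ≤ y + (d + y) := le_add_self
          _ = (y + d) + y := (add_assoc _ _ _).symm
      exact (add_le_add_iff_left _).mp h2
    have hy0 : y ≠ 0 := by
      rintro rfl
      exact hm0 (nonpos_iff_eq_zero.mp hmy)
    have hd0 : d ≠ 0 := by
      rintro rfl
      simp at h
    set β := log ω y with hβ
    by_cases hd1 : ω ^ Order.succ β ≤ d
    · exact add_absorp (hmy.trans_lt (lt_opow_succ_log_self one_lt_omega0 y))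
        ((hd1.trans hde).trans (le_add_self))
    · push_neg at hd1
      have hβd : ω ^ β ≤ d := by
        by_contra hc
        push_neg at hc
        have hdy : d + y = y := add_absorp hc (opow_log_le_self ω hy0)
        exact absurd h (hdy.le.trans le_self_add).not_gt
      have hone : (ω : Ordinal) ^ β ≠ 0 := (opow_pos β omega0_pos).ne'
      have hjω : d / ω ^ β < ω := (div_lt hone).mpr (by rwa [← opow_succ])
      have hkω : y / ω ^ β < ω := (div_lt hone).mpr
        (by rw [← opow_succ]; exact lt_opow_succ_log_self one_lt_omega0 y)
      have e1 : y + d = ω ^ β * (y / ω ^ β + d / ω ^ β) + d % ω ^ β := aux_sum_eq β y d hβd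
      have e2 : d + y = ω ^ β * (y / ω ^ β + d / ω ^ β) + y % ω ^ β := by
        rw [aux_sum_eq β d y (opow_log_le_self ω hy0), aux_nat_add_comm hjω hkω]
      have hym : d % ω ^ β + m = y % ω ^ β := by
        have h3 := hm
        rw [e1, e2, add_assoc] at h3
        exact (add_right_inj _).mp h3
      have hmlt : m < ω ^ β :=
        calc m ≤ d % ω ^ β + m := le_add_self
          _ = y % ω ^ β := hym
          _ < ω ^ β := mod_lt y hone
      exact add_absorp hmlt ((opow_log_le_self ω hy0).trans (le_self_add))

lemma aux_core (x y : Ordinal) (p q : ℕ) (hp : 0 < p) :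
    (x + ω ^ (q : Ordinal) * y) + (ω ^ (q : Ordinal) * y + ω ^ (p : Ordinal) * x)
      = (ω ^ (q : Ordinal) * y + x) + (ω ^ (q : Ordinal) * y + ω ^ (p : Ordinal) * x) := by
  rcases eq_or_ne y 0 with rfl | hy
  · simp
  have ho : (ω : Ordinal) ^ (q : Ordinal) ≠ 0 := (opow_pos _ omega0_pos).ne'
  set o := (ω : Ordinal) ^ (q : Ordinal) with hodef
  set d := x / o with hd
  set r := x % o with hrdf
  have hco : o ≤ o * y := by
    simpa using mul_le_mul_right (Ordinal.one_le_iff_ne_zero.mpr hy) o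
  have hr : r < o := mod_lt x ho
  have hrabs : r + o * y = o * y := add_absorp hr hco
  have hxc : x + o * y = o * (d + y) := by
    conv_lhs => rw [← div_add_mod x o]
    rw [add_assoc, hrabs, ← mul_add]
  have hcx : o * y + x = o * (y + d) + r := by
    conv_lhs => rw [← div_add_mod x o]
    rw [← add_assoc, ← mul_add]
  have hcomm : (ω : Ordinal) ^ (p : Ordinal) * o = o * ω ^ (p : Ordinal) := by
    rw [hodef, ← opow_add, ← opow_add, ← Nat.cast_add, ← Nat.cast_add, Nat.add_comm]
  have hpx : (ω : Ordinal) ^ (p : Ordinal) * x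
      = o * (ω ^ (p : Ordinal) * d) + ω ^ (p : Ordinal) * r := by
    conv_lhs => rw [← div_add_mod x o]
    rw [mul_add, ← mul_assoc, hcomm, mul_assoc]
  have hde : d ≤ ω ^ (p : Ordinal) * d := by
    simpa using mul_le_mul_left (Order.one_le_iff_pos.mpr (opow_pos (p : Ordinal) omega0_pos)) d
  have key := aux_swap_s8 d y (ω ^ (p : Ordinal) * d) hde
  calc (x + o * y) + (o * y + ω ^ (p : Ordinal) * x)
      = o * (d + y) + (o * y + (o * (ω ^ (p : Ordinal) * d) + ω ^ (p : Ordinal) * r)) := by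
        rw [hxc, hpx]
    _ = o * ((d + y) + (y + ω ^ (p : Ordinal) * d)) + ω ^ (p : Ordinal) * r := by
        simp only [mul_add, add_assoc]
    _ = o * ((y + d) + (y + ω ^ (p : Ordinal) * d)) + ω ^ (p : Ordinal) * r := by
        rw [key]
    _ = o * (y + d) + r + (o * y + (o * (ω ^ (p : Ordinal) * d) + ω ^ (p : Ordinal) * r)) := by
        simp only [mul_add, add_assoc]
        rw [← add_assoc r, hrabs]
    _ = (o * y + x) + (o * y + ω ^ (p : Ordinal) * x) := by rw [hcx, hpx]

theorem hidden_old_variable2 (x y t u : Ordinal) (p q : ℕ) (hp : 0 < p) :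
    x + ω ^ (q : Ordinal) * y + t + ω ^ (q : Ordinal) * y + u + ω ^ (p : Ordinal) * x
      = ω ^ (q : Ordinal) * y + x + t + ω ^ (q : Ordinal) * y + u + ω ^ (p : Ordinal) * x := by
  set c := (ω : Ordinal) ^ (q : Ordinal) * y with hc
  set Z := c + ω ^ (p : Ordinal) * x with hZ
  set T := t + (c + (u + ω ^ (p : Ordinal) * x)) with hT
  have hZT : Z ≤ T := by
    rw [hZ, hT]
    exact le_trans (add_le_add_right le_add_self c) le_add_self
  have hw : Z + (T - Z) = T := Ordinal.add_sub_cancel_of_le hZT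
  have key := aux_core x y p q hp
  have h1 : x + c + t + c + u + ω ^ (p : Ordinal) * x = (x + c) + T := by
    rw [hT]; simp only [add_assoc]
  have h2 : c + x + t + c + u + ω ^ (p : Ordinal) * x = (c + x) + T := by
    rw [hT]; simp only [add_assoc]
  rw [h1, h2, ← hw]
  conv_lhs => rw [← add_assoc]
  conv_rhs => rw [← add_assoc]
  exact congrArg (fun z => z + (T - Z)) key
end

section
/- For all ordinals x, y, z, t < ω^ω with the degrees satisfying ∂x = ∂y = μ and ∂(z + x + t + y) = μ, if x = ω^μ·a + α, y = ω^μ·b + β, z + x + t + y = ω^μ·c + γ with ∂α, ∂β, ∂γ < μ, then both x + y + (z + x + t + y) and y + x + (z + x + t + y) equal ω^μ·(a + b + c) + γ. -/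
open Ordinal

/-- The degree of a nonzero ordinal: the largest exponent in its Cantor normal
form, i.e. the logarithm in base `ω`. -/
noncomputable def deg (α : Ordinal) : Ordinal := Ordinal.log ω α

private lemma lt_opow_of_deg (α μ : Ordinal) (h : α = 0 ∨ deg α < μ) : α < ω ^ μ := by
  rcases h with h | h
  · subst h; exact opow_pos μ omega0_pos
  · calc α < ω ^ (Order.succ (Ordinal.log ω α)) :=
        Ordinal.lt_opow_succ_log_self one_lt_omega0 α
      _ ≤ ω ^ μ := opow_le_opow_right omega0_pos (Order.succ_le_of_lt h)

private lemma absorb (α μ : Ordinal) (n : ℕ) (hn : 0 < n) (h : α = 0 ∨ deg α < μ)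
    (δ : Ordinal) : α + (ω ^ μ * n + δ) = ω ^ μ * n + δ := by
  apply Ordinal.add_absorp (lt_opow_of_deg α μ h)
  calc ω ^ μ = ω ^ μ * 1 := (mul_one _).symm
    _ ≤ ω ^ μ * n := by
        apply mul_le_mul_right
        exact_mod_cast Nat.one_le_cast.mpr hn
    _ ≤ ω ^ μ * n + δ := le_add_right le_rfl

theorem guarded_commutation_key_case (x y z t : Ordinal) (μ : Ordinal)
    (hx : x < ω ^ ω) (hy : y < ω ^ ω) (hz : z < ω ^ ω) (ht : t < ω ^ ω)
    (hdx : deg x = μ) (hdy : deg y = μ) (hd : deg (z + x + t + y) = μ)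
    (a b c : ℕ) (ha : 0 < a) (hb : 0 < b) (hc : 0 < c)
    (α β γ : Ordinal)
    (hxd : x = ω ^ μ * a + α) (hyd : y = ω ^ μ * b + β)
    (hzd : z + x + t + y = ω ^ μ * c + γ)
    (hα : α = 0 ∨ deg α < μ) (hβ : β = 0 ∨ deg β < μ) (hγ : γ = 0 ∨ deg γ < μ) :
    x + y + (z + x + t + y) = ω ^ μ * ((a : Ordinal) + b + c) + γ ∧
    y + x + (z + x + t + y) = ω ^ μ * ((a : Ordinal) + b + c) + γ := by
  have key : ∀ (s : Ordinal) (n : ℕ) (δ ε : Ordinal), 0 < n → (δ = 0 ∨ deg δ < μ) →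
      (ω ^ μ * s + δ) + (ω ^ μ * n + ε) = ω ^ μ * (s + n) + ε := by
    intro s n δ ε hn hδ
    rw [add_assoc, absorb δ μ n hn hδ ε, ← add_assoc, mul_add]
  rw [hzd, hxd, hyd]
  constructor
  · rw [key a b α β hb hα, key ((a : Ordinal) + b) c β γ hc hβ]
  · rw [key b a β α ha hβ, key ((b : Ordinal) + a) c α γ hc hα]
    congr 2
    norm_cast
    omega
end

section
/- For every ordinal x and natural number p ≥ 1, if x ≥ ω^ω then ω^p·x has the same degree as x, while x + anything of degree < ∂(ω^p·x) absorbs: concretely, if x ≥ ω^ω and x = x₁ + x₂ with ν(x₁) ≥ ω and ∂(x₂) < ω, then ω^p·x = x₁ + ω^p·x₂. -/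
open Ordinal

/-- The valuation of an ordinal: the smallest exponent in its Cantor normal form. -/
noncomputable def val (α : Ordinal) : Ordinal :=
  (((Ordinal.CNF ω α).getLast?).map Prod.fst).getD 0

private lemma opow_dvd_opow_omega {a b : Ordinal} (h : a ≤ b) : ω ^ a ∣ ω ^ b := by
  refine ⟨ω ^ (b - a), ?_⟩
  rw [← Ordinal.opow_add, Ordinal.add_sub_cancel_of_le h]

private lemma val_rec {o : Ordinal} (ho : o ≠ 0) :
    val o = if o % ω ^ Ordinal.log ω o = 0 then Ordinal.log ω o
      else val (o % ω ^ Ordinal.log ω o) := by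
  unfold val
  rw [Ordinal.CNF.ne_zero ho]
  split_ifs with hr
  · rw [hr, Ordinal.CNF.zero_right]; rfl
  · rw [Ordinal.CNF.ne_zero hr, List.getLast?_cons_cons, ← Ordinal.CNF.ne_zero hr]

private lemma val_le_log (o : Ordinal) : val o ≤ Ordinal.log ω o := by
  induction o using Ordinal.induction with
  | h o IH =>
    rcases eq_or_ne o 0 with rfl | ho
    · simp [val]
    rw [val_rec ho]
    split_ifs with hr
    · exact le_rfl
    · exact le_trans (IH _ (Ordinal.mod_opow_log_lt_self ω ho))
        (Ordinal.log_mono_right ω (Ordinal.mod_opow_log_lt_self ω ho).le)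

private lemma opow_val_dvd (o : Ordinal) : ω ^ val o ∣ o := by
  induction o using Ordinal.induction with
  | h o IH =>
    rcases eq_or_ne o 0 with rfl | ho
    · exact dvd_zero _
    have hdm := Ordinal.div_add_mod o (ω ^ Ordinal.log ω o)
    rw [val_rec ho]
    split_ifs with hr
    · conv_rhs => rw [← hdm]
      rw [hr, add_zero]
      exact Dvd.dvd.mul_right ⟨1, (mul_one _).symm⟩ _
    · conv_rhs => rw [← hdm]
      refine dvd_add (Dvd.dvd.mul_right ?_ _) (IH _ (Ordinal.mod_opow_log_lt_self ω ho))
      exact opow_dvd_opow_omega (le_trans (val_le_log _)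
        (Ordinal.log_mono_right ω (Ordinal.mod_opow_log_lt_self ω ho).le))

theorem omega_pow_mul_decomposition (x : Ordinal) (p : ℕ) (hp : 1 ≤ p)
    (hx : ω ^ ω ≤ x) (x₁ x₂ : Ordinal) (h : x = x₁ + x₂)
    (h₁ : ω ≤ val x₁) (h₂ : deg x₂ < ω) :
    deg (ω ^ (p : Ordinal) * x) = deg x ∧
    ω ^ (p : Ordinal) * x = x₁ + ω ^ (p : Ordinal) * x₂ := by
  have hx0 : x ≠ 0 := (lt_of_lt_of_le (Ordinal.opow_pos _ omega0_pos) hx).ne'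
  have homega_le_log : ω ≤ Ordinal.log ω x :=
    (Ordinal.opow_le_iff_le_log one_lt_omega0 hx0).mp hx
  have hpomega : (p : Ordinal) < ω := nat_lt_omega0 p
  -- x₁ is a multiple of ω ^ ω
  obtain ⟨y, hy⟩ : ω ^ (ω : Ordinal) ∣ x₁ :=
    dvd_trans (opow_dvd_opow_omega h₁) (opow_val_dvd x₁)
  have habs : ω ^ (p : Ordinal) * x₁ = x₁ := by
    rw [hy, ← mul_assoc, ← Ordinal.opow_add, Ordinal.add_omega0 hpomega]
  have hpart2 : ω ^ (p : Ordinal) * x = x₁ + ω ^ (p : Ordinal) * x₂ := by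
    rw [h, mul_add, habs]
  refine ⟨?_, hpart2⟩
  -- degree part
  have hle : Ordinal.log ω x ≤ Ordinal.log ω (ω ^ (p : Ordinal) * x) := by
    refine Ordinal.log_mono_right ω ?_
    conv_lhs => rw [← one_mul x]
    exact mul_le_mul_left (Order.one_le_iff_pos.mpr (Ordinal.opow_pos _ omega0_pos)) x
  have hge : Ordinal.log ω (ω ^ (p : Ordinal) * x) ≤ Ordinal.log ω x := by
    have hxlt : x < ω ^ (Ordinal.log ω x + 1) := Ordinal.lt_opow_succ_log_self one_lt_omega0 x
    have hmul_lt : ω ^ (p : Ordinal) * x < ω ^ (Ordinal.log ω x + 1) := by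
      calc ω ^ (p : Ordinal) * x < ω ^ (p : Ordinal) * ω ^ (Ordinal.log ω x + 1) := by
            exact mul_lt_mul_of_pos_left hxlt (Ordinal.opow_pos _ omega0_pos)
        _ = ω ^ ((p : Ordinal) + (Ordinal.log ω x + 1)) := (Ordinal.opow_add _ _ _).symm
        _ = ω ^ (Ordinal.log ω x + 1) := by
            have hplog : (p : Ordinal) + Ordinal.log ω x = Ordinal.log ω x :=
              Ordinal.add_absorp (b := 1) (by rw [Ordinal.opow_one]; exact hpomega)
                (by rw [Ordinal.opow_one]; exact homega_le_log)
            rw [← add_assoc, hplog]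
    have hmx0 : ω ^ (p : Ordinal) * x ≠ 0 := by
      refine _root_.mul_ne_zero ?_ hx0
      exact (Ordinal.opow_pos _ omega0_pos).ne'
    have := (Ordinal.lt_opow_iff_log_lt one_lt_omega0 hmx0).mp hmul_lt
    rwa [Ordinal.add_one_eq_succ, Order.lt_succ_iff] at this
  exact le_antisymm hge hle
end

section
/- If two flat terms (sums of monomials ω^{e_i}·x_i with nonnegative integer exponents, nondecreasing exponents from right to left within each variable) define the same function from (ω^ω)^n to ω^ω, then for every variable x the subsequences of x-monomials in the two terms are equal as sequences. -/
open Ordinal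

/-- Evaluation of a flat term, given as the list of its monomials from left to
right, each monomial `(e, i)` denoting `ω^e · x_i`.  The sum is taken in
left-to-right order. -/
noncomputable def evalFlat (φ : ℕ → Ordinal) (l : List (ℕ × ℕ)) : Ordinal :=
  (l.map fun m => ω ^ (m.1 : Ordinal) * φ m.2).foldr (· + ·) 0

/-- A list of monomials is flat if, within each variable, the exponents are
nondecreasing from right to left (i.e. nonincreasing from left to right). -/
def IsFlat (l : List (ℕ × ℕ)) : Prop :=
  l.Pairwise fun m m' => m.2 = m'.2 → m'.1 ≤ m.1

lemma ord_add_two (a : Ordinal) : a + 2 = a + 1 + 1 := by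
  rw [← one_add_one_eq_two, ← add_assoc]

noncomputable def evalExp (t : Ordinal) : List ℕ → Ordinal
  | [] => 0
  | e :: E => ω ^ (e : Ordinal) * t + evalExp t E

lemma evalFlat_eq (t : Ordinal) (x : ℕ) (l : List (ℕ × ℕ)) :
    evalFlat (fun i => if i = x then t else 0) l
      = evalExp t ((l.filter (fun m => m.2 = x)).map Prod.fst) := by
  induction l with
  | nil => rfl
  | cons m l ih =>
      have hstep : evalFlat (fun i => if i = x then t else 0) (m :: l)
          = ω ^ (m.1 : Ordinal) * (if m.2 = x then t else 0)
            + evalFlat (fun i => if i = x then t else 0) l := rfl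
      rw [hstep, ih, List.filter_cons]
      by_cases hm : m.2 = x
      · simp [hm, evalExp]
      · simp [hm]

lemma evalExp_omega_lt (e : ℕ) :
    ∀ E : List ℕ, (∀ a ∈ E, a ≤ e) → evalExp ω E < ω ^ ((e : Ordinal) + 2) := by
  intro E
  induction E with
  | nil => intro _; exact opow_pos _ omega0_pos
  | cons a E ih =>
      intro hle
      have ha : (a : Ordinal) ≤ e := by exact_mod_cast hle a List.mem_cons_self
      have h1 : ω ^ (a : Ordinal) * ω < ω ^ ((e : Ordinal) + 2) := by
        rw [← opow_succ]
        exact (opow_lt_opow_iff_right one_lt_omega0).2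
          (by exact lt_of_le_of_lt (add_le_add_left ha 1) (by
            rw [ord_add_two]
            exact lt_add_of_pos_right _ zero_lt_one))
      exact (principal_add_omega0_opow _) h1
        (ih fun b hb => hle b (List.mem_cons_of_mem _ hb))

lemma evalExp_omega_le (e : ℕ) (E : List ℕ) :
    ω ^ ((e : Ordinal) + 1) ≤ evalExp ω (e :: E) := by
  rw [evalExp, ← opow_succ]
  exact le_add_right le_rfl

lemma evalExp_inj : ∀ E E' : List ℕ,
    E.Pairwise (fun a b => b ≤ a) → E'.Pairwise (fun a b => b ≤ a) →
    (∀ t : Ordinal, t < ω ^ ω → evalExp t E = evalExp t E') → E = E' := by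
  intro E
  induction E with
  | nil =>
      intro E' _ _ heq
      cases E' with
      | nil => rfl
      | cons e' F' =>
          exfalso
          have h1 : (1 : Ordinal) < ω ^ ω :=
            one_lt_omega0.trans_le (left_le_opow _ omega0_pos)
          have := heq 1 h1
          rw [evalExp, evalExp, mul_one] at this
          have : (0 : Ordinal) < 0 := by
            calc (0:Ordinal) < ω ^ (e' : Ordinal) := opow_pos _ omega0_pos
            _ ≤ ω ^ (e' : Ordinal) + evalExp 1 F' := le_add_right le_rfl
            _ = 0 := this.symm
          exact absurd this (lt_irrefl _)
  | cons e F ih =>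
      intro E' hE hE' heq
      cases E' with
      | nil =>
          exfalso
          have h1 : (1 : Ordinal) < ω ^ ω :=
            one_lt_omega0.trans_le (left_le_opow _ omega0_pos)
          have := heq 1 h1
          rw [evalExp, evalExp, mul_one] at this
          have : (0 : Ordinal) < 0 := by
            calc (0:Ordinal) < ω ^ (e : Ordinal) := opow_pos _ omega0_pos
            _ ≤ ω ^ (e : Ordinal) + evalExp 1 F := le_add_right le_rfl
            _ = 0 := this
          exact absurd this (lt_irrefl _)
      | cons e' F' =>
          have homega : ω < ω ^ ω := by
            conv_lhs => rw [← opow_one ω]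
            exact (opow_lt_opow_iff_right one_lt_omega0).2 one_lt_omega0
          have hv := heq ω homega
          -- bounds
          have hee : e = e' := by
            by_contra hne
            rcases Nat.lt_or_ge e e' with hlt | hge
            · have h1 := evalExp_omega_le e' F'
              have h2 := evalExp_omega_lt e (e :: F) (by
                intro a ha
                rcases List.mem_cons.1 ha with rfl | ha
                · exact le_refl _
                · exact (List.pairwise_cons.1 hE).1 a ha)
              rw [← hv] at h1
              have : ω ^ ((e' : Ordinal) + 1) < ω ^ ((e : Ordinal) + 2) :=
                lt_of_le_of_lt h1 h2
              have hle : ((e : Ordinal) + 2) ≤ ((e' : Ordinal) + 1) := by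
                have : (e : Ordinal) + 1 ≤ (e' : Ordinal) := by
                  exact_mod_cast Nat.succ_le_of_lt hlt
                calc (e : Ordinal) + 2 = ((e : Ordinal) + 1) + 1 := ord_add_two _
                _ ≤ (e' : Ordinal) + 1 := add_le_add_left this 1
              exact absurd ((opow_lt_opow_iff_right one_lt_omega0).1 this)
                (not_lt.2 hle)
            · have hlt : e' < e := Nat.lt_of_le_of_ne hge fun hh => hne hh.symm
              have h1 := evalExp_omega_le e F
              have h2 := evalExp_omega_lt e' (e' :: F') (by
                intro a ha
                rcases List.mem_cons.1 ha with rfl | ha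
                · exact le_refl _
                · exact (List.pairwise_cons.1 hE').1 a ha)
              rw [hv] at h1
              have : ω ^ ((e : Ordinal) + 1) < ω ^ ((e' : Ordinal) + 2) :=
                lt_of_le_of_lt h1 h2
              have hle : ((e' : Ordinal) + 2) ≤ ((e : Ordinal) + 1) := by
                have : (e' : Ordinal) + 1 ≤ (e : Ordinal) := by
                  exact_mod_cast Nat.succ_le_of_lt hlt
                calc (e' : Ordinal) + 2 = ((e' : Ordinal) + 1) + 1 := ord_add_two _
                _ ≤ (e : Ordinal) + 1 := add_le_add_left this 1
              exact absurd ((opow_lt_opow_iff_right one_lt_omega0).1 this)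
                (not_lt.2 hle)
          subst hee
          have hF : F = F' := by
            apply ih F' (List.pairwise_cons.1 hE).2 (List.pairwise_cons.1 hE').2
            intro t ht
            have := heq t ht
            rw [evalExp, evalExp] at this
            exact add_left_cancel this
          rw [hF]

lemma snd_const_eq (x : ℕ) : ∀ L L' : List (ℕ × ℕ),
    (∀ m ∈ L, m.2 = x) → (∀ m ∈ L', m.2 = x) →
    L.map Prod.fst = L'.map Prod.fst → L = L' := by
  intro L
  induction L with
  | nil => intro L' _ _ h; cases L' <;> simp_all
  | cons m L ih =>
      intro L' hL hL' h
      cases L' with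
      | nil => simp at h
      | cons m' L'new =>
          simp only [List.map_cons, List.cons.injEq] at h
          have h1 : m = m' := by
            have := hL m List.mem_cons_self
            have := hL' m' List.mem_cons_self
            ext
            · exact h.1
            · simp_all
          rw [h1, ih L'new (fun a ha => hL a (List.mem_cons_of_mem _ ha))
            (fun a ha => hL' a (List.mem_cons_of_mem _ ha)) h.2]

theorem flat_equiv_same_subsequences (l l' : List (ℕ × ℕ))
    (hl : IsFlat l) (hl' : IsFlat l')
    (h : ∀ φ : ℕ → Ordinal, (∀ i, φ i < ω ^ ω) → evalFlat φ l = evalFlat φ l') :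
    ∀ x : ℕ, l.filter (fun m => m.2 = x) = l'.filter (fun m => m.2 = x) := by
  intro x
  have hmem : ∀ m ∈ l.filter (fun m => m.2 = x), m.2 = x := by
    intro m hm; simpa using (List.mem_filter.1 hm).2
  have hmem' : ∀ m ∈ l'.filter (fun m => m.2 = x), m.2 = x := by
    intro m hm; simpa using (List.mem_filter.1 hm).2
  have key : ∀ L : List (ℕ × ℕ), IsFlat L →
      List.Pairwise (fun a b => b ≤ a) ((L.filter (fun m => m.2 = x)).map Prod.fst) := by
    intro L hL
    have h1 : List.Pairwise (fun m m' : ℕ × ℕ => m'.1 ≤ m.1)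
        (L.filter (fun m => m.2 = x)) := by
      refine List.Pairwise.imp_of_mem ?_ (hL.filter _)
      intro a b ha hb hab
      refine hab ?_
      have h2 := (List.mem_filter.1 ha).2
      have h3 := (List.mem_filter.1 hb).2
      simp only [decide_eq_true_eq] at h2 h3
      rw [h2, h3]
    exact h1.map _ (fun a b h => h)
  apply snd_const_eq x _ _ hmem hmem'
  apply evalExp_inj
  · exact key l hl
  · exact key l' hl'
  · intro t ht
    rw [← evalFlat_eq t x l, ← evalFlat_eq t x l']
    apply h
    intro i
    by_cases hi : i = x <;> simp [hi, ht, opow_pos _ omega0_pos]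
end

section
/- For ordinals a, b and natural number parameters: given a flat single-variable evaluation, two flat terms in one variable x over ω^ω are equivalent as functions ω^ω → ω^ω if and only if they are identical sequences of monomials; in particular, evaluating at x = 1 determines the number of monomials and the ordering constraint determines the exponents. -/
open Ordinal

/-- Evaluation at `x` of a flat one-variable term, given as the list of the
exponents of its monomials from left to right: `ω^{e_n}·x + ⋯ + ω^{e_1}·x`. -/
noncomputable def evalFlat1 (l : List ℕ) (x : Ordinal) : Ordinal :=
  (l.map fun e : ℕ => ω ^ (e : Ordinal) * x).foldr (· + ·) 0

lemma evalFlat1' (e : ℕ) (t : List ℕ) (x : Ordinal) :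
    evalFlat1 (e::t) x = ω ^ (e:Ordinal) * x + evalFlat1 t x := rfl

lemma S_lt (m : ℕ) : ∀ l : List ℕ, (∀ e ∈ l, e ≤ m) →
    evalFlat1 l 1 < ω ^ ((m:Ordinal)+1)
  | [], _ => by
      simpa [evalFlat1] using opow_pos ((m:Ordinal)+1) omega0_pos
  | e::t, h => by
      rw [evalFlat1', mul_one]
      apply principal_add_omega0_opow _ _ (S_lt m t fun x hx => h x (List.mem_cons_of_mem _ hx))
      exact (opow_lt_opow_iff_right one_lt_omega0).2
        (lt_of_le_of_lt (by exact_mod_cast h e List.mem_cons_self) (lt_add_one _))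

lemma S_head_le (b : ℕ) (t : List ℕ) : ω ^ (b:Ordinal) ≤ evalFlat1 (b::t) 1 := by
  rw [evalFlat1', mul_one]; exact le_add_right le_rfl

lemma S_pos (b : ℕ) (t : List ℕ) : 0 < evalFlat1 (b::t) 1 :=
  lt_of_lt_of_le (opow_pos _ omega0_pos) (S_head_le b t)

lemma key (a b : ℕ) (s t : List ℕ) (hs : ∀ e ∈ s, e ≤ a) (hab : a < b) :
    evalFlat1 (a::s) 1 ≠ evalFlat1 (b::t) 1 := by
  have h1 : evalFlat1 (a::s) 1 < ω ^ ((a:Ordinal)+1) := by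
    refine S_lt a _ fun x hx => ?_
    rcases List.mem_cons.1 hx with hx | hx
    · exact hx.le
    · exact hs x hx
  have h3 : ω ^ ((a:Ordinal)+1) ≤ ω ^ (b:Ordinal) :=
    opow_le_opow_right omega0_pos (by exact_mod_cast hab)
  exact ne_of_lt (lt_of_lt_of_le h1 (h3.trans (S_head_le b t)))

lemma S_inj : ∀ l l' : List ℕ, l.Pairwise (· ≥ ·) → l'.Pairwise (· ≥ ·) →
    evalFlat1 l 1 = evalFlat1 l' 1 → l = l'
  | [], [], _, _, _ => rfl
  | [], e::t, _, _, h => absurd h.symm (S_pos e t).ne'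
  | e::t, [], _, _, h => absurd h (S_pos e t).ne'
  | a::s, b::t, hl, hl', h => by
      rw [List.pairwise_cons] at hl hl'
      have hab : a = b := by
        rcases Nat.lt_trichotomy a b with hab | hab | hab
        · exact absurd h (key a b s t hl.1 hab)
        · exact hab
        · exact absurd h.symm (key b a t s hl'.1 hab)
      subst hab
      have : evalFlat1 s 1 = evalFlat1 t 1 := by
        rw [evalFlat1', evalFlat1'] at h
        exact (add_right_inj _).1 h
      rw [S_inj s t hl.2 hl'.2 this]

theorem one_variable_flat_equiv_iff_eq (l l' : List ℕ)
    (hl : l.Pairwise (· ≥ ·)) (hl' : l'.Pairwise (· ≥ ·)) :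
    (∀ x : Ordinal, x < ω ^ ω → evalFlat1 l x = evalFlat1 l' x) ↔ l = l' := by
  constructor
  · intro h
    refine S_inj l l' hl hl' (h 1 ?_)
    calc (1:Ordinal) < ω := one_lt_omega0
    _ = ω ^ (1:Ordinal) := (opow_one _).symm
    _ ≤ ω ^ ω := opow_le_opow_right omega0_pos one_lt_omega0.le
  · rintro rfl _ _; rfl
end
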